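/- If a contraction T on a Hilbert space H has an isometric co-extension V on K ⊇ H (V* extends T*), and V in turn has a co-isometric extension, and this alternating process of isometric co-extensions and co-isometric extensions can be continued indefinitely, then T has a unitary power dilation. Contrapositively: if a semigroup of contractions has no unitary dilation, then at some stage either an isometric co-extension or a co-isometric extension fails to exist. -/

import Mathlib

open ContinuousLinearMap Filter Topology

open scoped ComplexInnerProductSpace

/-- Two vectors are equal if they have the same norm and `⟪b, a⟫ = ⟪b, b⟫`. -/
private lemma aux_eq_of_norm_inner {H : Type*} [NormedAddCommGroup H]
    [InnerProductSpace ℂ H] {a b : H} (hn : ‖a‖ = ‖b‖)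
    (hi : ⟪b, a⟫ = ⟪b, b⟫) : a = b := by
  have hab : ⟪a, b⟫ = ⟪b, b⟫ := by
    have := congrArg (starRingEnd ℂ) hi
    rwa [inner_conj_symm, inner_conj_symm] at this
  have h1 : ⟪a - b, a - b⟫ = 0 := by
    rw [inner_sub_left, inner_sub_right, inner_sub_right, hi, hab,
      inner_self_eq_norm_sq_to_K a, inner_self_eq_norm_sq_to_K b, hn]
    ring
  exact sub_eq_zero.mp (inner_self_eq_zero.mp h1)

set_option maxHeartbeats 2000000 in
/-- If a contraction `T 0` admits an infinite alternating chain of isometric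
co-extensions (odd steps) and co-isometric extensions (even steps) on increasing closed
subspaces `H_n = range (P n)` of the ambient space, then `T 0` has a unitary power
dilation `U`. -/
theorem stmt10 {H : Type*} [NormedAddCommGroup H] [InnerProductSpace ℂ H] [CompleteSpace H]
    (P T : ℕ → H →L[ℂ] H)
    (hPproj : ∀ n, IsIdempotentElem (P n)) (hPsa : ∀ n, IsSelfAdjoint (P n))
    (hPmono : ∀ m n, m ≤ n → P n ∘L P m = P m)
    (hdense : (⨆ n, LinearMap.range (P n : H →ₗ[ℂ] H)).topologicalClosure = ⊤)
    (hsupp : ∀ n, P n ∘L T n = T n ∧ T n ∘L P n = T n)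
    (hcontr : ‖T 0‖ ≤ 1)
    (hodd_iso : ∀ n, ∀ x ∈ LinearMap.range (P (2 * n + 1) : H →ₗ[ℂ] H), ‖T (2 * n + 1) x‖ = ‖x‖)
    (hodd_coext : ∀ n, ∀ h ∈ LinearMap.range (P (2 * n) : H →ₗ[ℂ] H),
      adjoint (T (2 * n + 1)) h = adjoint (T (2 * n)) h)
    (heven_coiso : ∀ n, ∀ x ∈ LinearMap.range (P (2 * n + 2) : H →ₗ[ℂ] H),
      ‖adjoint (T (2 * n + 2)) x‖ = ‖x‖)
    (heven_ext : ∀ n, ∀ h ∈ LinearMap.range (P (2 * n + 1) : H →ₗ[ℂ] H),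
      T (2 * n + 2) h = T (2 * n + 1) h) :
    ∃ U : H →L[ℂ] H,
      (∀ x : H, ‖U x‖ = ‖x‖) ∧ (∀ x : H, ‖adjoint U x‖ = ‖x‖) ∧
      (∀ k, ∀ h ∈ LinearMap.range (P 0 : H →ₗ[ℂ] H), P 0 ((U ^ k) h) = ((T 0 ^ k) h)) := by
  classical
  -- Basic consequences of the hypotheses
  have hPadj : ∀ n, adjoint (P n) = P n := fun n =>
    ((ContinuousLinearMap.star_eq_adjoint (P n)).symm).trans (hPsa n)
  have hPinner : ∀ n (x y : H), ⟪P n x, y⟫ = ⟪x, P n y⟫ := by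
    intro n x y
    conv_lhs => rw [← hPadj n]
    exact adjoint_inner_left _ _ _
  have hPP : ∀ n (x : H), P n (P n x) = P n x := fun n x => by
    simpa using DFunLike.congr_fun (hPproj n) x
  have hPT : ∀ n (x : H), P n (T n x) = T n x := fun n x => by
    simpa using DFunLike.congr_fun (hsupp n).1 x
  have hTP : ∀ n (x : H), T n (P n x) = T n x := fun n x => by
    simpa using DFunLike.congr_fun (hsupp n).2 x
  have hmemT : ∀ n (x : H), T n x ∈ LinearMap.range (P n : H →ₗ[ℂ] H) := fun n x => ⟨T n x, hPT n x⟩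
  have hPfix : ∀ n (x : H), x ∈ LinearMap.range (P n : H →ₗ[ℂ] H) → P n x = x := by
    rintro n x ⟨y, rfl⟩; exact hPP n y
  have hrmono : ∀ m n, m ≤ n → LinearMap.range (P m : H →ₗ[ℂ] H) ≤ LinearMap.range (P n : H →ₗ[ℂ] H) := by
    intro m n hmn x hx
    refine ⟨x, ?_⟩
    obtain ⟨y, rfl⟩ := hx
    calc P n (P m y) = (P n ∘L P m) y := rfl
      _ = P m y := by rw [hPmono m n hmn]
  have hadjP : ∀ n (x : H), P n (adjoint (T n) x) = adjoint (T n) x := by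
    intro n x
    have h := congrArg ContinuousLinearMap.adjoint (hsupp n).2
    rw [adjoint_comp, hPadj n] at h
    calc P n (adjoint (T n) x) = (P n ∘L adjoint (T n)) x := rfl
      _ = adjoint (T n) x := by rw [h]
  have hadjTP : ∀ n (x : H), adjoint (T n) (P n x) = adjoint (T n) x := by
    intro n x
    have h := congrArg ContinuousLinearMap.adjoint (hsupp n).1
    rw [adjoint_comp, hPadj n] at h
    calc adjoint (T n) (P n x) = (adjoint (T n) ∘L P n) x := rfl
      _ = adjoint (T n) x := by rw [h]
  have hadjmemT : ∀ n (x : H), adjoint (T n) x ∈ LinearMap.range (P n : H →ₗ[ℂ] H) :=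
    fun n x => ⟨adjoint (T n) x, hadjP n x⟩
  -- projections are contractions
  have hPnorm : ∀ n (x : H), ‖P n x‖ ≤ ‖x‖ := by
    intro n x
    rcases eq_or_lt_of_le (norm_nonneg (P n x)) with h0 | h0
    · rw [← h0]; exact norm_nonneg x
    · have h2 : ‖P n x‖ * ‖P n x‖ ≤ ‖x‖ * ‖P n x‖ := by
        calc ‖P n x‖ * ‖P n x‖ = RCLike.re ⟪P n x, P n x⟫ :=
              (inner_self_eq_norm_mul_norm (P n x)).symm
          _ = RCLike.re ⟪x, P n (P n x)⟫ := by rw [hPinner]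
          _ = RCLike.re ⟪x, P n x⟫ := by rw [hPP]
          _ ≤ ‖⟪x, P n x⟫‖ := RCLike.re_le_norm _
          _ ≤ ‖x‖ * ‖P n x‖ := norm_inner_le_norm _ _
      exact le_of_mul_le_mul_right h2 h0
  -- all `T n` are contractions
  have normTop : ∀ n, ‖T n‖ ≤ 1 := by
    intro n
    rcases Nat.even_or_odd n with he | ho
    · obtain ⟨r, hr⟩ := he
      rcases Nat.eq_zero_or_pos r with h0 | h0
      · subst h0; simp only [Nat.add_zero] at hr; subst hr; exact hcontr
      · obtain ⟨j, hj⟩ : ∃ j, n = 2 * j + 2 := ⟨r - 1, by omega⟩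
        subst hj
        have hadj : ‖adjoint (T (2 * j + 2))‖ ≤ 1 := by
          refine opNorm_le_bound _ zero_le_one fun x => ?_
          rw [one_mul, ← hadjTP]
          rw [heven_coiso j (P (2 * j + 2) x) ⟨x, rfl⟩]
          exact hPnorm _ _
        calc ‖T (2 * j + 2)‖ = ‖adjoint (T (2 * j + 2))‖ :=
              (ContinuousLinearMap.adjoint.norm_map (T (2 * j + 2))).symm
          _ ≤ 1 := hadj
    · obtain ⟨j, hj⟩ := ho
      subst hj
      refine opNorm_le_bound _ zero_le_one fun x => ?_
      rw [one_mul, ← hTP]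
      rw [hodd_iso j (P (2 * j + 1) x) ⟨x, rfl⟩]
      exact hPnorm _ _
  have normT : ∀ n (x : H), ‖T n x‖ ≤ ‖x‖ := by
    intro n x
    calc ‖T n x‖ ≤ ‖T n‖ * ‖x‖ := le_opNorm _ _
      _ ≤ 1 * ‖x‖ := by
          exact mul_le_mul_of_nonneg_right (normTop n) (norm_nonneg x)
      _ = ‖x‖ := one_mul _
  have normTadj : ∀ n (x : H), ‖adjoint (T n) x‖ ≤ ‖x‖ := by
    intro n x
    calc ‖adjoint (T n) x‖ ≤ ‖adjoint (T n)‖ * ‖x‖ := le_opNorm _ _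
      _ = ‖T n‖ * ‖x‖ := by rw [ContinuousLinearMap.adjoint.norm_map]
      _ ≤ 1 * ‖x‖ := mul_le_mul_of_nonneg_right (normTop n) (norm_nonneg x)
      _ = ‖x‖ := one_mul _
  -- one–step stabilization lemmas
  have stepA : ∀ n (x : H), x ∈ LinearMap.range (P (2 * n + 1) : H →ₗ[ℂ] H) →
      T (2 * n + 3) x = T (2 * n + 2) x := by
    intro n x hx
    have hx3 : x ∈ LinearMap.range (P (2 * n + 3) : H →ₗ[ℂ] H) := hrmono _ _ (by omega) hx
    have hb : T (2 * n + 2) x ∈ LinearMap.range (P (2 * n + 2) : H →ₗ[ℂ] H) := hmemT _ _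
    have hco : adjoint (T (2 * n + 3)) (T (2 * n + 2) x)
        = adjoint (T (2 * n + 2)) (T (2 * n + 2) x) := hodd_coext (n + 1) _ hb
    apply aux_eq_of_norm_inner
    · have h1 : ‖T (2 * n + 3) x‖ = ‖x‖ := hodd_iso (n + 1) x hx3
      have h2 : T (2 * n + 2) x = T (2 * n + 1) x := heven_ext n x hx
      have h3 : ‖T (2 * n + 1) x‖ = ‖x‖ := hodd_iso n x hx
      rw [h1, h2, h3]
    · calc ⟪T (2 * n + 2) x, T (2 * n + 3) x⟫
          = ⟪adjoint (T (2 * n + 3)) (T (2 * n + 2) x), x⟫ :=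
            (adjoint_inner_left _ _ _).symm
        _ = ⟪adjoint (T (2 * n + 2)) (T (2 * n + 2) x), x⟫ := by rw [hco]
        _ = ⟪T (2 * n + 2) x, T (2 * n + 2) x⟫ := adjoint_inner_left _ _ _
  have stepB : ∀ n (h : H), h ∈ LinearMap.range (P (2 * n + 2) : H →ₗ[ℂ] H) →
      adjoint (T (2 * n + 4)) h = adjoint (T (2 * n + 3)) h := by
    intro n h hh
    have hb_eq : adjoint (T (2 * n + 3)) h = adjoint (T (2 * n + 2)) h :=
      hodd_coext (n + 1) h hh
    have hbmem : adjoint (T (2 * n + 3)) h ∈ LinearMap.range (P (2 * n + 3) : H →ₗ[ℂ] H) :=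
      hadjmemT _ _
    have hext : T (2 * n + 4) (adjoint (T (2 * n + 3)) h)
        = T (2 * n + 3) (adjoint (T (2 * n + 3)) h) := heven_ext (n + 1) _ hbmem
    apply aux_eq_of_norm_inner
    · have h4 : ‖adjoint (T (2 * n + 4)) h‖ = ‖h‖ :=
        heven_coiso (n + 1) h (hrmono _ _ (by omega) hh)
      have h2 : ‖adjoint (T (2 * n + 2)) h‖ = ‖h‖ := heven_coiso n h hh
      rw [h4, hb_eq, h2]
    · calc ⟪adjoint (T (2 * n + 3)) h, adjoint (T (2 * n + 4)) h⟫
          = ⟪T (2 * n + 4) (adjoint (T (2 * n + 3)) h), h⟫ := adjoint_inner_right _ _ _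
        _ = ⟪T (2 * n + 3) (adjoint (T (2 * n + 3)) h), h⟫ := by rw [hext]
        _ = ⟪adjoint (T (2 * n + 3)) h, adjoint (T (2 * n + 3)) h⟫ :=
            (adjoint_inner_right _ _ _).symm
  -- full stabilization
  have stabT : ∀ k (x : H), x ∈ LinearMap.range (P (2 * k + 1) : H →ₗ[ℂ] H) →
      ∀ m, 2 * k + 1 ≤ m → T m x = T (2 * k + 1) x := by
    intro k x hx m hm
    induction m, hm using Nat.le_induction with
    | base => rfl
    | succ m hm ih =>
      rw [← ih]
      rcases Nat.even_or_odd m with he | ho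
      · obtain ⟨r, hr⟩ := he
        obtain ⟨j, hj⟩ : ∃ j, m = 2 * j + 2 := ⟨r - 1, by omega⟩
        subst hj
        exact stepA j x (hrmono _ _ (by omega) hx)
      · obtain ⟨j, hj⟩ := ho
        subst hj
        exact heven_ext j x (hrmono _ _ (by omega) hx)
  have stabTadj : ∀ k (h : H), h ∈ LinearMap.range (P (2 * k + 2) : H →ₗ[ℂ] H) →
      ∀ m, 2 * k + 2 ≤ m → adjoint (T m) h = adjoint (T (2 * k + 2)) h := by
    intro k h hh m hm
    induction m, hm using Nat.le_induction with
    | base => rfl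
    | succ m hm ih =>
      rw [← ih]
      rcases Nat.even_or_odd m with he | ho
      · obtain ⟨r, hr⟩ := he
        obtain ⟨j, hj⟩ : ∃ j, m = 2 * j + 2 := ⟨r - 1, by omega⟩
        subst hj
        exact hodd_coext (j + 1) h (hrmono _ _ (by omega) hh)
      · obtain ⟨r, hr⟩ := ho
        obtain ⟨j, hj⟩ : ∃ j, m = 2 * j + 3 := ⟨r - 1, by omega⟩
        subst hj
        exact stepB j h (hrmono _ _ (by omega) hh)
  -- density
  set s : Set H := ⋃ n, (LinearMap.range (P n : H →ₗ[ℂ] H) : Set H) with hs_def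
  have hclos : closure s = Set.univ := by
    have hmono : Monotone (fun n => LinearMap.range (P n : H →ₗ[ℂ] H) : ℕ → Submodule ℂ H) :=
      fun m n hmn => hrmono m n hmn
    have hcoe : ((⨆ n, LinearMap.range (P n : H →ₗ[ℂ] H) : Submodule ℂ H) : Set H) = s :=
      Submodule.coe_iSup_of_chain ⟨_, hmono⟩
    have h1 := congrArg (SetLike.coe) hdense
    rwa [Submodule.topologicalClosure_coe, Submodule.top_coe, hcoe] at h1
  have hsdense : Dense s := by rw [dense_iff_closure_eq]; exact hclos
  have hmem_s : ∀ x : H, x ∈ s ↔ ∃ k, x ∈ LinearMap.range (P k : H →ₗ[ℂ] H) := by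
    intro x; exact Set.mem_iUnion
  -- Cauchy sequences and limits
  have hCauchyU : ∀ x : H, CauchySeq (fun m => T m x) := by
    intro x
    rw [Metric.cauchySeq_iff]
    intro ε hε
    have hx : x ∈ closure s := by rw [hclos]; trivial
    obtain ⟨y, hy_mem, hy⟩ := Metric.mem_closure_iff.mp hx (ε / 2) (by linarith)
    obtain ⟨k, hk⟩ := (hmem_s y).mp hy_mem
    refine ⟨2 * k + 1, fun m hm n hn => ?_⟩
    have hy1 : y ∈ LinearMap.range (P (2 * k + 1) : H →ₗ[ℂ] H) := hrmono _ _ (by omega) hk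
    have hmy : T m y = T n y := by
      rw [stabT k y hy1 m hm, stabT k y hy1 n hn]
    have hdiff : T m x - T n x = T m (x - y) - T n (x - y) := by
      simp only [map_sub]
      rw [hmy]; abel
    have hxy : ‖x - y‖ < ε / 2 := by rwa [← dist_eq_norm]
    calc dist (T m x) (T n x) = ‖T m x - T n x‖ := dist_eq_norm _ _
      _ = ‖T m (x - y) - T n (x - y)‖ := by rw [hdiff]
      _ ≤ ‖T m (x - y)‖ + ‖T n (x - y)‖ := norm_sub_le _ _
      _ ≤ ‖x - y‖ + ‖x - y‖ := add_le_add (normT _ _) (normT _ _)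
      _ < ε := by linarith
  have hCauchyW : ∀ x : H, CauchySeq (fun m => adjoint (T m) x) := by
    intro x
    rw [Metric.cauchySeq_iff]
    intro ε hε
    have hx : x ∈ closure s := by rw [hclos]; trivial
    obtain ⟨y, hy_mem, hy⟩ := Metric.mem_closure_iff.mp hx (ε / 2) (by linarith)
    obtain ⟨k, hk⟩ := (hmem_s y).mp hy_mem
    refine ⟨2 * k + 2, fun m hm n hn => ?_⟩
    have hy1 : y ∈ LinearMap.range (P (2 * k + 2) : H →ₗ[ℂ] H) := hrmono _ _ (by omega) hk
    have hmy : adjoint (T m) y = adjoint (T n) y := by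
      rw [stabTadj k y hy1 m hm, stabTadj k y hy1 n hn]
    have hdiff : adjoint (T m) x - adjoint (T n) x
        = adjoint (T m) (x - y) - adjoint (T n) (x - y) := by
      simp only [map_sub]
      rw [hmy]; abel
    have hxy : ‖x - y‖ < ε / 2 := by rwa [← dist_eq_norm]
    calc dist (adjoint (T m) x) (adjoint (T n) x)
        = ‖adjoint (T m) x - adjoint (T n) x‖ := dist_eq_norm _ _
      _ = ‖adjoint (T m) (x - y) - adjoint (T n) (x - y)‖ := by rw [hdiff]
      _ ≤ ‖adjoint (T m) (x - y)‖ + ‖adjoint (T n) (x - y)‖ := norm_sub_le _ _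
      _ ≤ ‖x - y‖ + ‖x - y‖ := add_le_add (normTadj _ _) (normTadj _ _)
      _ < ε := by linarith
  have hUex : ∀ x : H, ∃ l, Tendsto (fun m => T m x) atTop (𝓝 l) :=
    fun x => cauchySeq_tendsto_of_complete (hCauchyU x)
  have hWex : ∀ x : H, ∃ l, Tendsto (fun m => adjoint (T m) x) atTop (𝓝 l) :=
    fun x => cauchySeq_tendsto_of_complete (hCauchyW x)
  choose Uf hUf using hUex
  choose Wf hWf using hWex
  -- build the continuous linear maps
  let Ulin : H →ₗ[ℂ] H :=
    { toFun := Uf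
      map_add' := fun x y => tendsto_nhds_unique (hUf (x + y))
        (by simpa only [map_add] using (hUf x).add (hUf y))
      map_smul' := fun c x => tendsto_nhds_unique (hUf (c • x))
        (by simpa only [map_smul, RingHom.id_apply] using (hUf x).const_smul c) }
  have hUbound : ∀ x : H, ‖Ulin x‖ ≤ 1 * ‖x‖ := by
    intro x
    rw [one_mul]
    exact le_of_tendsto (hUf x).norm (Eventually.of_forall fun m => normT m x)
  let U : H →L[ℂ] H := LinearMap.mkContinuous Ulin 1 hUbound
  have hUapp : ∀ x : H, U x = Uf x := fun x => rfl
  let Wlin : H →ₗ[ℂ] H :=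
    { toFun := Wf
      map_add' := fun x y => tendsto_nhds_unique (hWf (x + y))
        (by simpa only [map_add] using (hWf x).add (hWf y))
      map_smul' := fun c x => tendsto_nhds_unique (hWf (c • x))
        (by simpa only [map_smul, RingHom.id_apply] using (hWf x).const_smul c) }
  have hWbound : ∀ x : H, ‖Wlin x‖ ≤ 1 * ‖x‖ := by
    intro x
    rw [one_mul]
    exact le_of_tendsto (hWf x).norm (Eventually.of_forall fun m => normTadj m x)
  let W : H →L[ℂ] H := LinearMap.mkContinuous Wlin 1 hWbound
  have hWapp : ∀ x : H, W x = Wf x := fun x => rfl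
  -- U agrees with the stabilized values
  have hUeq : ∀ k (x : H), x ∈ LinearMap.range (P (2 * k + 1) : H →ₗ[ℂ] H) →
      U x = T (2 * k + 1) x := by
    intro k x hx
    rw [hUapp]
    refine tendsto_nhds_unique (hUf x) ?_
    refine Tendsto.congr' ?_ tendsto_const_nhds
    filter_upwards [eventually_ge_atTop (2 * k + 1)] with m hm
    exact (stabT k x hx m hm).symm
  have hWeq : ∀ k (x : H), x ∈ LinearMap.range (P (2 * k + 2) : H →ₗ[ℂ] H) →
      W x = adjoint (T (2 * k + 2)) x := by
    intro k x hx
    rw [hWapp]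
    refine tendsto_nhds_unique (hWf x) ?_
    refine Tendsto.congr' ?_ tendsto_const_nhds
    filter_upwards [eventually_ge_atTop (2 * k + 2)] with m hm
    exact (stabTadj k x hx m hm).symm
  -- adjoint of U is W
  have hadjUW : adjoint U = W := by
    refine ContinuousLinearMap.ext fun x => ?_
    refine ext_inner_right ℂ fun v => ?_
    rw [adjoint_inner_left]
    have h1 : Tendsto (fun m => ⟪x, T m v⟫) atTop (𝓝 ⟪x, U v⟫) := by
      rw [hUapp]
      exact Tendsto.inner tendsto_const_nhds (hUf v)
    have h2 : Tendsto (fun m => ⟪adjoint (T m) x, v⟫) atTop (𝓝 ⟪W x, v⟫) := by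
      rw [hWapp]
      exact Tendsto.inner (hWf x) tendsto_const_nhds
    have h3 : ∀ m, ⟪adjoint (T m) x, v⟫ = ⟪x, T m v⟫ :=
      fun m => adjoint_inner_left _ _ _
    exact (tendsto_nhds_unique (h2.congr h3) h1).symm
  -- U is a surjective isometry (unitary)
  have hUiso : ∀ x : H, ‖U x‖ = ‖x‖ := by
    have heq : Set.EqOn (fun x => ‖U x‖) (fun x => ‖x‖) s := by
      intro x hx
      obtain ⟨k, hk⟩ := (hmem_s x).mp hx
      have hx1 : x ∈ LinearMap.range (P (2 * k + 1) : H →ₗ[ℂ] H) := hrmono _ _ (by omega) hk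
      simp only
      rw [hUeq k x hx1]
      exact hodd_iso k x hx1
    have hfun : (fun x : H => ‖U x‖) = fun x => ‖x‖ :=
      Continuous.ext_on hsdense (U.continuous.norm) continuous_norm heq
    exact fun x => congrFun hfun x
  have hWiso : ∀ x : H, ‖W x‖ = ‖x‖ := by
    have heq : Set.EqOn (fun x => ‖W x‖) (fun x => ‖x‖) s := by
      intro x hx
      obtain ⟨k, hk⟩ := (hmem_s x).mp hx
      have hx1 : x ∈ LinearMap.range (P (2 * k + 2) : H →ₗ[ℂ] H) := hrmono _ _ (by omega) hk
      simp only
      rw [hWeq k x hx1]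
      exact heven_coiso k x hx1
    have hfun : (fun x : H => ‖W x‖) = fun x => ‖x‖ :=
      Continuous.ext_on hsdense (W.continuous.norm) continuous_norm heq
    exact fun x => congrFun hfun x
  -- dilation identity
  have lemI : ∀ x : H, P 0 (T 1 x) = T 0 x := by
    intro x
    refine ext_inner_right ℂ fun v => ?_
    have hPv : P 0 v ∈ LinearMap.range (P 0 : H →ₗ[ℂ] H) := ⟨v, rfl⟩
    have hco : adjoint (T 1) (P 0 v) = adjoint (T 0) (P 0 v) := hodd_coext 0 _ hPv
    calc ⟪P 0 (T 1 x), v⟫ = ⟪T 1 x, P 0 v⟫ := hPinner 0 _ v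
      _ = ⟪x, adjoint (T 1) (P 0 v)⟫ := by rw [adjoint_inner_right]
      _ = ⟪x, adjoint (T 0) (P 0 v)⟫ := by rw [hco]
      _ = ⟪T 0 x, P 0 v⟫ := adjoint_inner_right _ _ _
      _ = ⟪P 0 (T 0 x), v⟫ := (hPinner 0 _ v).symm
      _ = ⟪T 0 x, v⟫ := by rw [hPT 0 x]
  have hT1mem : ∀ k (x : H), x ∈ LinearMap.range (P 1 : H →ₗ[ℂ] H) →
      (T 1 ^ k) x ∈ LinearMap.range (P 1 : H →ₗ[ℂ] H) := by
    intro k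
    induction k with
    | zero => intro x hx; simpa using hx
    | succ k ih =>
      intro x hx
      rw [pow_succ, ContinuousLinearMap.mul_apply]
      exact ih (T 1 x) (hmemT 1 x)
  have hUpow : ∀ k (x : H), x ∈ LinearMap.range (P 1 : H →ₗ[ℂ] H) → (U ^ k) x = (T 1 ^ k) x := by
    intro k
    induction k with
    | zero => intro x hx; simp
    | succ k ih =>
      intro x hx
      rw [pow_succ, ContinuousLinearMap.mul_apply, pow_succ,
        ContinuousLinearMap.mul_apply, hUeq 0 x hx]
      exact ih (T 1 x) (hmemT 1 x)
  have hfinal : ∀ k (h : H), h ∈ LinearMap.range (P 0 : H →ₗ[ℂ] H) →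
      P 0 ((T 1 ^ k) h) = (T 0 ^ k) h := by
    intro k h hh
    induction k with
    | zero => simpa using hPfix 0 h hh
    | succ k ih =>
      calc P 0 ((T 1 ^ (k + 1)) h) = P 0 (T 1 ((T 1 ^ k) h)) := by
            rw [pow_succ', ContinuousLinearMap.mul_apply]
        _ = T 0 ((T 1 ^ k) h) := lemI _
        _ = T 0 (P 0 ((T 1 ^ k) h)) := (hTP 0 _).symm
        _ = T 0 ((T 0 ^ k) h) := by rw [ih]
        _ = (T 0 ^ (k + 1)) h := by rw [pow_succ', ContinuousLinearMap.mul_apply]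
  refine ⟨U, hUiso, ?_, ?_⟩
  · intro x
    rw [hadjUW]
    exact hWiso x
  · intro k h hh
    rw [hUpow k h (hrmono 0 1 (by omega) hh)]
    exact hfinal k h hh
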